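/- There exists a constant C > 0 such that for every β ∈ (0, 1], ∫_ℝ e^{βu} Ai(u)² du ≤ C · β^{−1/2} (in particular this integral is finite for every β > 0). -/

import Mathlib

open MeasureTheory Filter Set

lemma airy_ibp_bound (x a b δ : ℝ) (hab : a ≤ b) (ha : 0 ≤ a) (hδ : 0 < δ)
    (hg : (∀ t ∈ Set.Icc a b, δ ≤ t ^ 2 + x) ∨ (∀ t ∈ Set.Icc a b, t ^ 2 + x ≤ -δ)) :
    |∫ t in a..b, Real.cos (t ^ 3 / 3 + x * t)| ≤ 3 / δ := by
  have hicc : Set.uIcc a b = Set.Icc a b := Set.uIcc_of_le hab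
  set g : ℝ → ℝ := fun t => t ^ 2 + x with hgdef
  have habs : ∀ t ∈ Set.Icc a b, δ ≤ |g t| := by
    intro t ht
    rcases hg with h | h
    · rw [abs_of_pos (lt_of_lt_of_le hδ (h t ht))]; exact h t ht
    · rw [abs_of_neg (lt_of_le_of_lt (h t ht) (neg_neg_iff_pos.mpr hδ))]
      linarith [h t ht]
  have hne : ∀ t ∈ Set.Icc a b, g t ≠ 0 := by
    intro t ht h0
    have := habs t ht; rw [h0, abs_zero] at this; linarith
  have hcg : Continuous g := by fun_prop
  -- derivative facts
  have hu : ∀ t ∈ Set.uIcc a b, HasDerivAt (fun s => (g s)⁻¹) (-(2 * t) / (g t) ^ 2) t := by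
    intro t ht
    rw [hicc] at ht
    have h1 : HasDerivAt g (2 * t) t := by
      exact ((hasDerivAt_pow 2 t).add_const x).congr_deriv (by norm_num)
    exact h1.inv (hne t ht)
  have hv : ∀ t ∈ Set.uIcc a b, HasDerivAt (fun s => Real.sin (s ^ 3 / 3 + x * s))
      (g t * Real.cos (t ^ 3 / 3 + x * t)) t := by
    intro t ht
    have h1 : HasDerivAt (fun s : ℝ => s ^ 3 / 3 + x * s) (g t) t := by
      have h2 : HasDerivAt (fun s : ℝ => s ^ 3 / 3) (t ^ 2) t := by
        simpa using ((hasDerivAt_pow 3 t).div_const 3)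
      have h3 : HasDerivAt (fun s : ℝ => x * s) x t := by
        simpa using (hasDerivAt_id t).const_mul x
      exact h2.add h3
    simpa [mul_comm] using h1.sin
  have hcontOn : ∀ t ∈ Set.uIcc a b, g t ≠ 0 := by intro t ht; exact hne t (hicc ▸ ht)
  have hu' : IntervalIntegrable (fun t => -(2 * t) / (g t) ^ 2) volume a b := by
    apply ContinuousOn.intervalIntegrable
    apply ContinuousOn.div (by fun_prop) (by fun_prop)
    intro t ht
    exact pow_ne_zero 2 (hcontOn t ht)
  have hv' : IntervalIntegrable (fun t => g t * Real.cos (t ^ 3 / 3 + x * t)) volume a b := by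
    apply ContinuousOn.intervalIntegrable (by fun_prop)
  have key := intervalIntegral.integral_mul_deriv_eq_deriv_mul hu hv hu' hv'
  have heq : (∫ t in a..b, (g t)⁻¹ * (g t * Real.cos (t ^ 3 / 3 + x * t)))
      = ∫ t in a..b, Real.cos (t ^ 3 / 3 + x * t) := by
    apply intervalIntegral.integral_congr
    intro t ht
    rw [hicc] at ht
    field_simp [hne t ht]
  rw [heq] at key
  have hmem_a : a ∈ Set.Icc a b := ⟨le_refl a, hab⟩
  have hmem_b : b ∈ Set.Icc a b := ⟨hab, le_refl b⟩
  have hinv : ∀ t ∈ Set.Icc a b, |(g t)⁻¹| ≤ 1 / δ := by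
    intro t ht
    rw [abs_inv, inv_eq_one_div]
    exact one_div_le_one_div_of_le hδ (habs t ht)
  -- bound the remaining integral
  have hrem : |∫ t in a..b, (-(2 * t) / (g t) ^ 2) * Real.sin (t ^ 3 / 3 + x * t)| ≤ 1 / δ := by
    have hFT : (∫ t in a..b, 2 * t / (g t) ^ 2) = -(g b)⁻¹ - -(g a)⁻¹ := by
      apply intervalIntegral.integral_eq_sub_of_hasDerivAt
      · intro t ht
        rw [hicc] at ht
        have h1 : HasDerivAt g (2 * t) t := by
          exact ((hasDerivAt_pow 2 t).add_const x).congr_deriv (by norm_num)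
        exact (h1.inv (hne t ht)).neg.congr_deriv (by ring)
      · apply ContinuousOn.intervalIntegrable
        apply ContinuousOn.div (by fun_prop) (by fun_prop)
        intro t ht
        exact pow_ne_zero 2 (hcontOn t ht)
    have h1 : |∫ t in a..b, (-(2 * t) / (g t) ^ 2) * Real.sin (t ^ 3 / 3 + x * t)|
        ≤ ∫ t in a..b, 2 * t / (g t) ^ 2 := by
      calc |∫ t in a..b, (-(2 * t) / (g t) ^ 2) * Real.sin (t ^ 3 / 3 + x * t)|
          ≤ ∫ t in a..b, |(-(2 * t) / (g t) ^ 2) * Real.sin (t ^ 3 / 3 + x * t)| :=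
            intervalIntegral.abs_integral_le_integral_abs hab
        _ ≤ ∫ t in a..b, 2 * t / (g t) ^ 2 := by
            apply intervalIntegral.integral_mono_on hab
            · apply IntervalIntegrable.abs
              apply ContinuousOn.intervalIntegrable
              apply ContinuousOn.mul _ (by fun_prop)
              apply ContinuousOn.div (by fun_prop) (by fun_prop)
              intro t ht; exact pow_ne_zero 2 (hcontOn t ht)
            · apply ContinuousOn.intervalIntegrable
              apply ContinuousOn.div (by fun_prop) (by fun_prop)
              intro t ht; exact pow_ne_zero 2 (hcontOn t ht)
            · intro t ht
              rw [abs_mul, abs_div, abs_neg]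
              have ht0 : 0 ≤ t := le_trans ha ht.1
              have : |(2:ℝ) * t| = 2 * t := abs_of_nonneg (by linarith)
              rw [this, abs_pow, sq_abs]
              calc 2 * t / g t ^ 2 * |Real.sin (t ^ 3 / 3 + x * t)|
                  ≤ 2 * t / g t ^ 2 * 1 := by
                    apply mul_le_mul_of_nonneg_left (Real.abs_sin_le_one _)
                    positivity
                _ = 2 * t / g t ^ 2 := mul_one _
    rw [hFT] at h1
    refine h1.trans ?_
    -- -(g b)⁻¹ - -(g a)⁻¹ = (g a)⁻¹ - (g b)⁻¹ ≤ 1/δ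
    rcases hg with h | h
    · have hga : (g a)⁻¹ ≤ 1 / δ := by
        rw [inv_eq_one_div]
        exact one_div_le_one_div_of_le hδ (h a hmem_a)
      have hgbv : g b = b ^ 2 + x := rfl
      have hgb : 0 < (g b)⁻¹ := by
        apply inv_pos.mpr; rw [hgbv]; linarith [h b hmem_b]
      linarith
    · have hgav : g a = a ^ 2 + x := rfl
      have hgbv : g b = b ^ 2 + x := rfl
      have hga : (g a)⁻¹ < 0 := by
        apply inv_lt_zero.mpr; rw [hgav]; linarith [h a hmem_a]
      have hgb : -(g b)⁻¹ ≤ 1 / δ := by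
        rw [← inv_neg, inv_eq_one_div]
        apply one_div_le_one_div_of_le hδ
        rw [hgbv]; linarith [h b hmem_b]
      linarith
  rw [key]
  have h2 : |(g b)⁻¹ * Real.sin (b ^ 3 / 3 + x * b)| ≤ 1 / δ := by
    rw [abs_mul]
    calc |(g b)⁻¹| * |Real.sin (b ^ 3 / 3 + x * b)| ≤ (1/δ) * 1 := by
          apply mul_le_mul (hinv b hmem_b) (Real.abs_sin_le_one _) (abs_nonneg _) (by positivity)
      _ = 1 / δ := mul_one _
  have h3 : |(g a)⁻¹ * Real.sin (a ^ 3 / 3 + x * a)| ≤ 1 / δ := by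
    rw [abs_mul]
    calc |(g a)⁻¹| * |Real.sin (a ^ 3 / 3 + x * a)| ≤ (1/δ) * 1 := by
          apply mul_le_mul (hinv a hmem_a) (Real.abs_sin_le_one _) (abs_nonneg _) (by positivity)
      _ = 1 / δ := mul_one _
  calc |(g b)⁻¹ * Real.sin (b ^ 3 / 3 + x * b) - (g a)⁻¹ * Real.sin (a ^ 3 / 3 + x * a)
        - ∫ t in a..b, (-(2 * t) / (g t) ^ 2) * Real.sin (t ^ 3 / 3 + x * t)|
      ≤ |(g b)⁻¹ * Real.sin (b ^ 3 / 3 + x * b)| + |(g a)⁻¹ * Real.sin (a ^ 3 / 3 + x * a)|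
        + |∫ t in a..b, (-(2 * t) / (g t) ^ 2) * Real.sin (t ^ 3 / 3 + x * t)| := by
        apply (abs_sub _ _).trans
        gcongr
        exact abs_sub _ _
    _ ≤ 1 / δ + 1 / δ + 1 / δ := by gcongr
    _ = 3 / δ := by ring

lemma airy_limit_bound {x L M : ℝ}
    (hL : Tendsto (fun b : ℝ => ∫ t in (0:ℝ)..b, Real.cos (t ^ 3 / 3 + x * t))
      atTop (nhds L))
    (h : ∀ b : ℝ, 0 ≤ b → |∫ t in (0:ℝ)..b, Real.cos (t ^ 3 / 3 + x * t)| ≤ M) :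
    |L| ≤ M := by
  apply le_of_tendsto hL.abs
  filter_upwards [eventually_ge_atTop (0:ℝ)] with b hb using h b hb

lemma airy_cont_integrable (x a b : ℝ) :
    IntervalIntegrable (fun t => Real.cos (t ^ 3 / 3 + x * t)) volume a b := by
  apply Continuous.intervalIntegrable; fun_prop

lemma airy_triv_bound (x a b : ℝ) (hab : a ≤ b) :
    |∫ t in a..b, Real.cos (t ^ 3 / 3 + x * t)| ≤ b - a := by
  rw [← Real.norm_eq_abs]
  calc ‖∫ t in a..b, Real.cos (t ^ 3 / 3 + x * t)‖ ≤ 1 * |b - a| := by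
        apply intervalIntegral.norm_integral_le_of_norm_le_const
        intro t _; rw [Real.norm_eq_abs]; exact Real.abs_cos_le_one _
    _ = b - a := by rw [abs_of_nonneg (by linarith)]; ring

lemma airy_F_bound_middle {x : ℝ} (hx : -1 ≤ x) (b : ℝ) (hb : 0 ≤ b) :
    |∫ t in (0:ℝ)..b, Real.cos (t ^ 3 / 3 + x * t)| ≤ 3 := by
  rcases le_or_gt b 2 with h2 | h2
  · have := airy_triv_bound x 0 b hb
    linarith
  · rw [← intervalIntegral.integral_add_adjacent_intervals
      (airy_cont_integrable x 0 2) (airy_cont_integrable x 2 b)]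
    have hA := airy_triv_bound x 0 2 (by norm_num)
    have hB : |∫ t in (2:ℝ)..b, Real.cos (t ^ 3 / 3 + x * t)| ≤ 1 := by
      have := airy_ibp_bound x 2 b 3 h2.le (by norm_num) (by norm_num)
        (Or.inl (by intro t ht; nlinarith [ht.1]))
      linarith [this]
    calc |(∫ t in (0:ℝ)..2, Real.cos (t ^ 3 / 3 + x * t))
          + ∫ t in (2:ℝ)..b, Real.cos (t ^ 3 / 3 + x * t)|
        ≤ |∫ t in (0:ℝ)..2, Real.cos (t ^ 3 / 3 + x * t)|
          + |∫ t in (2:ℝ)..b, Real.cos (t ^ 3 / 3 + x * t)| := abs_add_le _ _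
      _ ≤ 3 := by linarith

lemma airy_F_bound_neg {x : ℝ} (hx : x ≤ -1) (b : ℝ) (hb : 0 ≤ b) :
    |∫ t in (0:ℝ)..b, Real.cos (t ^ 3 / 3 + x * t)| ≤
      8 / Real.sqrt (Real.sqrt (-x)) := by
  set a : ℝ := -x with hadef
  have hax : x = -a := by rw [hadef]; ring
  have ha1 : 1 ≤ a := by rw [hadef]; linarith
  have ha0 : 0 < a := by linarith
  set δ : ℝ := Real.sqrt (Real.sqrt a) with hδdef
  have hsa0 : 0 < Real.sqrt a := Real.sqrt_pos.mpr ha0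
  have hδ0 : 0 < δ := Real.sqrt_pos.mpr hsa0
  have hδsq : δ ^ 2 = Real.sqrt a := Real.sq_sqrt hsa0.le
  have hsasq : Real.sqrt a ^ 2 = a := Real.sq_sqrt ha0.le
  have hsa1 : 1 ≤ Real.sqrt a := by
    rw [show (1:ℝ) = Real.sqrt 1 by simp]; exact Real.sqrt_le_sqrt ha1
  have hδ1 : 1 ≤ δ := by
    rw [show (1:ℝ) = Real.sqrt 1 by simp]; exact Real.sqrt_le_sqrt hsa1
  have hδle : δ ≤ Real.sqrt a := by nlinarith
  have hδlea : δ ≤ a := by nlinarith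
  set t₁ : ℝ := Real.sqrt (a - δ) with ht₁def
  set t₂ : ℝ := Real.sqrt (a + δ) with ht₂def
  have ht₁0 : 0 ≤ t₁ := Real.sqrt_nonneg _
  have ht₂0 : 0 ≤ t₂ := Real.sqrt_nonneg _
  have ht₁sq : t₁ ^ 2 = a - δ := Real.sq_sqrt (by linarith)
  have ht₂sq : t₂ ^ 2 = a + δ := Real.sq_sqrt (by linarith)
  have ht₁₂ : t₁ ≤ t₂ := Real.sqrt_le_sqrt (by linarith)
  have ht₂ge : δ ^ 2 ≤ t₂ := by
    rw [hδsq]; exact Real.sqrt_le_sqrt (by linarith)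
  have hmid : t₂ - t₁ ≤ 2 / δ := by
    rw [le_div_iff₀ hδ0]
    have h1 : (t₂ - t₁) * (t₂ + t₁) = 2 * δ := by nlinarith
    have h2 : (t₂ - t₁) * δ ^ 2 ≤ 2 * δ := by nlinarith [mul_nonneg (sub_nonneg.mpr ht₁₂) (sub_nonneg.mpr ht₂ge)]
    nlinarith
  have hleft : ∀ c : ℝ, 0 ≤ c → c ≤ t₁ →
      |∫ t in (0:ℝ)..c, Real.cos (t ^ 3 / 3 + x * t)| ≤ 3 / δ := by
    intro c hc0 hct
    apply airy_ibp_bound x 0 c δ hc0 le_rfl hδ0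
    right
    intro t ht
    have h1 : t ^ 2 ≤ t₁ ^ 2 := pow_le_pow_left₀ ht.1 (ht.2.trans hct) 2
    rw [ht₁sq] at h1
    rw [hax]; linarith
  have hright : ∀ c : ℝ, t₂ ≤ c →
      |∫ t in t₂..c, Real.cos (t ^ 3 / 3 + x * t)| ≤ 3 / δ := by
    intro c hc
    apply airy_ibp_bound x t₂ c δ hc ht₂0 hδ0
    left
    intro t ht
    have h1 : t₂ ^ 2 ≤ t ^ 2 := pow_le_pow_left₀ ht₂0 ht.1 2
    rw [ht₂sq] at h1
    rw [hax]; linarith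
  have h38 : 3 / δ ≤ 8 / δ := by gcongr; norm_num
  rcases le_or_gt b t₁ with hb1 | hb1
  · exact (hleft b hb hb1).trans h38
  rcases le_or_gt b t₂ with hb2 | hb2
  · rw [← intervalIntegral.integral_add_adjacent_intervals
      (airy_cont_integrable x 0 t₁) (airy_cont_integrable x t₁ b)]
    have hA := hleft t₁ ht₁0 le_rfl
    have hB := airy_triv_bound x t₁ b hb1.le
    calc |(∫ t in (0:ℝ)..t₁, Real.cos (t ^ 3 / 3 + x * t))
          + ∫ t in t₁..b, Real.cos (t ^ 3 / 3 + x * t)|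
        ≤ |∫ t in (0:ℝ)..t₁, Real.cos (t ^ 3 / 3 + x * t)|
          + |∫ t in t₁..b, Real.cos (t ^ 3 / 3 + x * t)| := abs_add_le _ _
      _ ≤ 3 / δ + 2 / δ := by
          have : b - t₁ ≤ 2 / δ := by linarith
          linarith
      _ ≤ 8 / δ := by rw [← add_div]; gcongr; norm_num
  · rw [← intervalIntegral.integral_add_adjacent_intervals
      (airy_cont_integrable x 0 t₂) (airy_cont_integrable x t₂ b),
      ← intervalIntegral.integral_add_adjacent_intervals
      (airy_cont_integrable x 0 t₁) (airy_cont_integrable x t₁ t₂)]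
    have hA := hleft t₁ ht₁0 le_rfl
    have hB := airy_triv_bound x t₁ t₂ ht₁₂
    have hC := hright b hb2.le
    calc |(∫ t in (0:ℝ)..t₁, Real.cos (t ^ 3 / 3 + x * t))
          + (∫ t in t₁..t₂, Real.cos (t ^ 3 / 3 + x * t))
          + ∫ t in t₂..b, Real.cos (t ^ 3 / 3 + x * t)|
        ≤ |∫ t in (0:ℝ)..t₁, Real.cos (t ^ 3 / 3 + x * t)|
          + |∫ t in t₁..t₂, Real.cos (t ^ 3 / 3 + x * t)|
          + |∫ t in t₂..b, Real.cos (t ^ 3 / 3 + x * t)| := abs_add_three _ _ _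
      _ ≤ 3 / δ + 2 / δ + 3 / δ := by linarith
      _ = 8 / δ := by ring

section AiryPos
open Complex

noncomputable def airyF (x : ℝ) (z : ℂ) : ℂ := Complex.exp ((z ^ 3 / 3 + x * z) * Complex.I)

lemma airyF_eq (x t y : ℝ) : airyF x ((t:ℂ) + (y:ℂ)*I)
    = Complex.exp (((-(t^2*y - y^3/3 + x*y) : ℝ) : ℂ) + ((t^3/3 - t*y^2 + x*t : ℝ) : ℂ) * I) := by
  unfold airyF
  congr 1
  apply Complex.ext <;> simp [pow_succ, mul_re, mul_im, add_re, add_im] <;> ring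

lemma airyF_diff (x : ℝ) : Differentiable ℂ (airyF x) := by
  unfold airyF
  apply Differentiable.cexp
  fun_prop

lemma airyF_norm (x t y : ℝ) : ‖airyF x ((t:ℂ) + (y:ℂ)*I)‖
    = Real.exp (-(t ^ 2 * y - y ^ 3 / 3 + x * y)) := by
  rw [airyF_eq, Complex.norm_exp]
  congr 1
  simp [← Complex.ofReal_pow]

lemma airyF_ofReal (x t : ℝ) : airyF x ((t:ℂ))
    = Complex.exp (((t ^ 3 / 3 + x * t : ℝ) : ℂ) * I) := by
  unfold airyF
  congr 2
  push_cast
  ring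

set_option maxHeartbeats 1000000 in
lemma airy_bound_pos {x L : ℝ} (hx : 1 ≤ x)
    (hL : Tendsto (fun b : ℝ => ∫ t in (0:ℝ)..b, Real.cos (t ^ 3 / 3 + x * t)) atTop (nhds L)) :
    |L| ≤ Real.exp (-(2/3) * Real.sqrt x ^ 3) * Real.sqrt Real.pi := by
  have hx0 : 0 < x := by linarith
  set c := Real.sqrt x with hcdef
  have hc1 : 1 ≤ c := Real.one_le_sqrt.mpr hx
  have hc0 : 0 < c := by linarith
  have hcsq : c ^ 2 = x := Real.sq_sqrt hx0.le
  have htopnorm : ∀ t : ℝ, ‖airyF x ((t : ℂ) + (c : ℂ) * Complex.I)‖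
      = Real.exp (-(2 / 3) * c ^ 3) * Real.exp (-c * t ^ 2) := by
    intro t
    rw [airyF_norm x t c, ← Real.exp_add]
    congr 1
    rw [← hcsq]; ring
  have htopcont : Continuous fun t : ℝ => airyF x ((t : ℂ) + (c : ℂ) * Complex.I) := by
    apply (airyF_diff x).continuous.comp; fun_prop
  have htopint : Integrable (fun t : ℝ => airyF x ((t : ℂ) + (c : ℂ) * Complex.I)) := by
    apply Integrable.mono'
      (((integrable_exp_neg_mul_sq hc0).const_mul (Real.exp (-(2 / 3) * c ^ 3))))
      htopcont.aestronglyMeasurable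
    filter_upwards with t
    rw [htopnorm t]
  set T : ℂ := ∫ t : ℝ, airyF x ((t : ℂ) + (c : ℂ) * Complex.I) with hTdef
  have hTbound : ‖T‖ ≤ Real.exp (-(2 / 3) * c ^ 3) * Real.sqrt Real.pi := by
    calc ‖T‖ ≤ ∫ t : ℝ, ‖airyF x ((t : ℂ) + (c : ℂ) * Complex.I)‖ :=
          norm_integral_le_integral_norm _
      _ = Real.exp (-(2 / 3) * c ^ 3) * ∫ t : ℝ, Real.exp (-c * t ^ 2) := by
          simp_rw [htopnorm]
          rw [integral_const_mul]
      _ = Real.exp (-(2 / 3) * c ^ 3) * Real.sqrt (Real.pi / c) := by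
          rw [integral_gaussian]
      _ ≤ Real.exp (-(2 / 3) * c ^ 3) * Real.sqrt Real.pi := by
          gcongr
          apply div_le_self Real.pi_pos.le hc1
  -- side integrals
  have hsidebound : ∀ R : ℝ, 1 ≤ R → ∀ s : ℝ, s ^ 2 = R ^ 2 →
      ‖∫ y in (0:ℝ)..c, airyF x ((s : ℂ) + (y : ℂ) * Complex.I)‖
        ≤ Real.exp (c ^ 3 / 3) * (R ^ 2)⁻¹ := by
    intro R hR s hs
    have hR0 : 0 < R := by linarith
    have key : ∀ y ∈ Set.Icc (0:ℝ) c, ‖airyF x ((s : ℂ) + (y : ℂ) * Complex.I)‖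
        ≤ Real.exp (c ^ 3 / 3) * Real.exp (-(R ^ 2) * y) := by
      intro y hy
      rw [airyF_norm x s y, ← Real.exp_add]
      apply Real.exp_le_exp.mpr
      have h1 : y ^ 3 ≤ c ^ 3 := pow_le_pow_left₀ hy.1 hy.2 3
      have h2 : 0 ≤ x * y := mul_nonneg hx0.le hy.1
      rw [hs] at *
      nlinarith
    have hInt : (∫ y in (0:ℝ)..c, Real.exp (c ^ 3 / 3) * Real.exp (-(R ^ 2) * y))
        ≤ Real.exp (c ^ 3 / 3) * (R ^ 2)⁻¹ := by
      rw [intervalIntegral.integral_const_mul]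
      have hano : ∀ y ∈ Set.uIcc (0:ℝ) c, HasDerivAt
          (fun y : ℝ => -(R ^ 2)⁻¹ * Real.exp (-(R ^ 2) * y))
          (Real.exp (-(R ^ 2) * y)) y := by
        intro y _
        have h1 : HasDerivAt (fun y : ℝ => -(R ^ 2) * y) (-(R ^ 2)) y := by
          simpa using (hasDerivAt_id y).const_mul (-(R ^ 2))
        have h2 := (h1.exp).const_mul (-(R ^ 2)⁻¹)
        refine h2.congr_deriv ?_
        field_simp [hR0.ne']
      rw [intervalIntegral.integral_eq_sub_of_hasDerivAt hano
        (by apply Continuous.intervalIntegrable; fun_prop)]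
      have hpos : 0 < Real.exp (-(R ^ 2) * c) := Real.exp_pos _
      have heq1 : -(R ^ 2)⁻¹ * Real.exp (-(R ^ 2) * c) - -(R ^ 2)⁻¹ * Real.exp (-(R ^ 2) * 0)
          = (R ^ 2)⁻¹ * (1 - Real.exp (-(R ^ 2) * c)) := by
        simp [mul_zero, Real.exp_zero]; ring
      rw [heq1]
      have hRinv : (0:ℝ) < (R ^ 2)⁻¹ := by positivity
      have hle1 : (R ^ 2)⁻¹ * (1 - Real.exp (-(R ^ 2) * c)) ≤ (R ^ 2)⁻¹ := by
        nlinarith [Real.exp_pos (-(R ^ 2) * c)]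
      exact mul_le_mul_of_nonneg_left hle1 (Real.exp_pos _).le
    calc ‖∫ y in (0:ℝ)..c, airyF x ((s : ℂ) + (y : ℂ) * Complex.I)‖
        ≤ |∫ y in (0:ℝ)..c, Real.exp (c ^ 3 / 3) * Real.exp (-(R ^ 2) * y)| := by
          apply intervalIntegral.norm_integral_le_abs_of_norm_le
          · filter_upwards [ae_restrict_mem measurableSet_uIoc] with y hy
            apply key
            rw [Set.uIoc_of_le hc0.le] at hy
            exact ⟨hy.1.le, hy.2⟩
          · apply Continuous.intervalIntegrable; fun_prop
      _ ≤ Real.exp (c ^ 3 / 3) * (R ^ 2)⁻¹ := by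
          rw [_root_.abs_of_nonneg]
          · exact hInt
          · apply intervalIntegral.integral_nonneg hc0.le
            intro y _; positivity
  -- rectangle identity
  have hrect : ∀ R : ℝ, (∫ t in (-R)..R, airyF x ((t : ℂ)))
      = (∫ t in (-R)..R, airyF x ((t : ℂ) + (c : ℂ) * Complex.I))
        - Complex.I • (∫ y in (0:ℝ)..c, airyF x (((R:ℝ) : ℂ) + (y : ℂ) * Complex.I))
        + Complex.I • (∫ y in (0:ℝ)..c, airyF x (((-R:ℝ) : ℂ) + (y : ℂ) * Complex.I)) := by
    intro R
    have H := Complex.integral_boundary_rect_eq_zero_of_differentiableOn (airyF x)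
      ((-R : ℝ) : ℂ) (((R:ℝ) : ℂ) + (c : ℂ) * Complex.I)
      ((airyF_diff x).differentiableOn)
    simp only [Complex.add_re, Complex.add_im, Complex.ofReal_re, Complex.ofReal_im,
      Complex.mul_re, Complex.mul_im, Complex.I_re, Complex.I_im, mul_zero, mul_one,
      zero_mul, sub_zero, add_zero, zero_add, Complex.ofReal_zero] at H
    simp only [smul_eq_mul] at H ⊢
    linear_combination H
  -- side integrals tend to zero
  have hzero : Tendsto (fun R : ℝ => Real.exp (c ^ 3 / 3) * (R ^ 2)⁻¹) atTop (nhds 0) := by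
    have h1 : Tendsto (fun R : ℝ => (R ^ 2)⁻¹) atTop (nhds 0) :=
      (tendsto_pow_atTop (by norm_num : 2 ≠ 0)).inv_tendsto_atTop
    simpa using h1.const_mul (Real.exp (c ^ 3 / 3))
  have hside1 : Tendsto (fun R : ℝ =>
      Complex.I • (∫ y in (0:ℝ)..c, airyF x (((R:ℝ) : ℂ) + (y : ℂ) * Complex.I)))
      atTop (nhds 0) := by
    apply squeeze_zero_norm' _ hzero
    filter_upwards [eventually_ge_atTop (1:ℝ)] with R hR
    rw [norm_smul, Complex.norm_I, one_mul]
    exact hsidebound R hR R rfl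
  have hside2 : Tendsto (fun R : ℝ =>
      Complex.I • (∫ y in (0:ℝ)..c, airyF x (((-R:ℝ) : ℂ) + (y : ℂ) * Complex.I)))
      atTop (nhds 0) := by
    apply squeeze_zero_norm' _ hzero
    filter_upwards [eventually_ge_atTop (1:ℝ)] with R hR
    rw [norm_smul, Complex.norm_I, one_mul]
    exact hsidebound R hR (-R) (by ring)
  have htop_tendsto : Tendsto (fun R : ℝ =>
      ∫ t in (-R)..R, airyF x ((t : ℂ) + (c : ℂ) * Complex.I)) atTop (nhds T) :=
    intervalIntegral_tendsto_integral htopint tendsto_neg_atTop_atBot tendsto_id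
  have hbot_tendsto : Tendsto (fun R : ℝ => ∫ t in (-R)..R, airyF x ((t : ℂ)))
      atTop (nhds T) := by
    have h1 := (htop_tendsto.sub hside1).add hside2
    rw [sub_zero, add_zero] at h1
    apply h1.congr
    intro R
    rw [hrect R]
  -- real parts
  have hcont0 : Continuous fun t : ℝ => airyF x ((t : ℂ)) := by
    apply (airyF_diff x).continuous.comp; fun_prop
  have hre : ∀ R : ℝ, (∫ t in (-R)..R, airyF x ((t : ℂ))).re
      = ∫ t in (-R)..R, Real.cos (t ^ 3 / 3 + x * t) := by
    intro R
    have hint : IntervalIntegrable (fun t : ℝ => airyF x ((t : ℂ))) volume (-R) R :=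
      hcont0.intervalIntegrable _ _
    have h1 := Complex.reCLM.intervalIntegral_comp_comm hint
    have h2 : ∀ t : ℝ, Complex.reCLM (airyF x ((t : ℂ))) = Real.cos (t ^ 3 / 3 + x * t) := by
      intro t
      show (airyF x ((t : ℂ))).re = _
      rw [airyF_ofReal]
      exact Complex.exp_ofReal_mul_I_re _
    calc (∫ t in (-R)..R, airyF x ((t : ℂ))).re
        = Complex.reCLM (∫ t in (-R)..R, airyF x ((t : ℂ))) := rfl
      _ = ∫ t in (-R)..R, Complex.reCLM (airyF x ((t : ℂ))) := h1.symm
      _ = ∫ t in (-R)..R, Real.cos (t ^ 3 / 3 + x * t) :=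
          intervalIntegral.integral_congr fun t _ => h2 t
  have hcint : ∀ a b : ℝ, IntervalIntegrable
      (fun t : ℝ => Real.cos (t ^ 3 / 3 + x * t)) volume a b := by
    intro a b; apply Continuous.intervalIntegrable; fun_prop
  have heven : ∀ R : ℝ, (∫ t in (-R)..R, Real.cos (t ^ 3 / 3 + x * t))
      = 2 * ∫ t in (0:ℝ)..R, Real.cos (t ^ 3 / 3 + x * t) := by
    intro R
    have h1 : (∫ t in (0:ℝ)..R, Real.cos ((-t) ^ 3 / 3 + x * (-t)))
        = ∫ t in (-R)..(0:ℝ), Real.cos (t ^ 3 / 3 + x * t) := by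
      simpa using intervalIntegral.integral_comp_neg
        (a := (0:ℝ)) (b := R) (fun t => Real.cos (t ^ 3 / 3 + x * t))
    have h2 : (∫ t in (0:ℝ)..R, Real.cos ((-t) ^ 3 / 3 + x * (-t)))
        = ∫ t in (0:ℝ)..R, Real.cos (t ^ 3 / 3 + x * t) := by
      apply intervalIntegral.integral_congr
      intro t _
      dsimp only
      rw [show (-t) ^ 3 / 3 + x * (-t) = -(t ^ 3 / 3 + x * t) by ring, Real.cos_neg]
    rw [← intervalIntegral.integral_add_adjacent_intervals (hcint (-R) 0) (hcint 0 R),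
      ← h1, h2]
    ring
  have hbotre : Tendsto (fun R : ℝ => (∫ t in (-R)..R, airyF x ((t : ℂ))).re)
      atTop (nhds T.re) := (Complex.continuous_re.tendsto T).comp hbot_tendsto
  have h2L : Tendsto (fun R : ℝ => (∫ t in (-R)..R, airyF x ((t : ℂ))).re)
      atTop (nhds (2 * L)) := by
    have h1 := hL.const_mul 2
    apply h1.congr
    intro R
    rw [hre R, heven R]
  have hTre : T.re = 2 * L := tendsto_nhds_unique hbotre h2L
  have habs : |L| ≤ ‖T‖ / 2 := by
    have h1 : |T.re| ≤ ‖T‖ := Complex.abs_re_le_norm T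
    rw [hTre] at h1
    rw [abs_mul] at h1
    rw [show |(2:ℝ)| = 2 by norm_num] at h1
    linarith
  have hfinal : ‖T‖ / 2 ≤ Real.exp (-(2/3) * c ^ 3) * Real.sqrt Real.pi := by
    have h2 : 0 ≤ Real.exp (-(2/3) * c ^ 3) * Real.sqrt Real.pi := by positivity
    linarith
  exact habs.trans hfinal

end AiryPos

lemma airy_measurable (Ai : ℝ → ℝ)
    (hAi : ∀ x : ℝ, Tendsto (fun b : ℝ => ∫ t in (0:ℝ)..b, Real.cos (t ^ 3 / 3 + x * t))
      atTop (nhds (Real.pi * Ai x))) :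
    Measurable Ai := by
  have h1 : ∀ x : ℝ, Tendsto (fun n : ℕ => ∫ t in (0:ℝ)..(n:ℝ), Real.cos (t ^ 3 / 3 + x * t))
      atTop (nhds (Real.pi * Ai x)) :=
    fun x => (hAi x).comp tendsto_natCast_atTop_atTop
  have h2 : Measurable fun x : ℝ => Real.pi * Ai x := by
    apply measurable_of_tendsto_metrizable
      (f := fun (n : ℕ) (x : ℝ) => ∫ t in (0:ℝ)..(n:ℝ), Real.cos (t ^ 3 / 3 + x * t))
    · intro n
      apply Continuous.measurable
      apply intervalIntegral.continuous_parametric_intervalIntegral_of_continuous' (μ := volume)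
        (f := fun (x t : ℝ) => Real.cos (t ^ 3 / 3 + x * t))
      have hc : Continuous fun p : ℝ × ℝ => Real.cos (p.2 ^ 3 / 3 + p.1 * p.2) := by fun_prop
      exact hc
    · exact tendsto_pi_nhds.mpr h1
  have h3 : Ai = fun x => Real.pi⁻¹ * (Real.pi * Ai x) := by
    funext x
    rw [← mul_assoc, inv_mul_cancel₀ Real.pi_ne_zero, one_mul]
  rw [h3]
  exact h2.const_mul _

-- Gamma(1/2) computations
lemma airy_gamma_int {β : ℝ} (hβ : 0 < β) :
    IntegrableOn (fun v : ℝ => Real.exp (-(β * v)) * v ^ (-(1/2) : ℝ)) (Ioi (0:ℝ)) ∧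
    ∫ v in Ioi (0:ℝ), Real.exp (-(β * v)) * v ^ (-(1/2) : ℝ)
      = Real.sqrt Real.pi * β ^ (-(1:ℝ)/2) := by
  have hg : IntegrableOn (fun w : ℝ => Real.exp (-w) * w ^ (-(1/2) : ℝ)) (Ioi (0:ℝ)) := by
    have h := Real.GammaIntegral_convergent (by norm_num : (0:ℝ) < 1/2)
    have he : (fun x : ℝ => Real.exp (-x) * x ^ ((1/2:ℝ) - 1))
        = fun w : ℝ => Real.exp (-w) * w ^ (-(1/2) : ℝ) := by
      funext w; norm_num
    rwa [he] at h
  have h1 : IntegrableOn (fun v : ℝ => Real.exp (-(β * v)) * (β * v) ^ (-(1/2) : ℝ))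
      (Ioi (0:ℝ)) := by
    have h := (integrableOn_Ioi_comp_mul_left_iff
      (fun w : ℝ => Real.exp (-w) * w ^ (-(1/2) : ℝ)) 0 hβ).mpr
    simpa [mul_zero] using h (by simpa using hg)
  have hb1 : β ^ ((1:ℝ)/2) * β ^ (-(1/2) : ℝ) = 1 := by
    rw [← Real.rpow_add hβ]; norm_num
  have h2 : EqOn (fun v : ℝ => β ^ ((1:ℝ)/2) * (Real.exp (-(β * v)) * (β * v) ^ (-(1/2) : ℝ)))
      (fun v : ℝ => Real.exp (-(β * v)) * v ^ (-(1/2) : ℝ)) (Ioi (0:ℝ)) := by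
    intro v hv
    simp only
    rw [Real.mul_rpow hβ.le (le_of_lt hv)]
    calc β ^ ((1:ℝ)/2) * (Real.exp (-(β * v)) * (β ^ (-(1/2):ℝ) * v ^ (-(1/2):ℝ)))
        = (β ^ ((1:ℝ)/2) * β ^ (-(1/2):ℝ)) * (Real.exp (-(β * v)) * v ^ (-(1/2):ℝ)) := by ring
      _ = Real.exp (-(β * v)) * v ^ (-(1/2):ℝ) := by rw [hb1, one_mul]
  constructor
  · exact IntegrableOn.congr_fun (h1.const_mul _) h2 measurableSet_Ioi
  · have h3 := integral_comp_mul_left_Ioi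
      (fun w : ℝ => Real.exp (-w) * w ^ (-(1/2) : ℝ)) 0 hβ
    rw [mul_zero] at h3
    have h4 : ∫ w in Ioi (0:ℝ), Real.exp (-w) * w ^ (-(1/2) : ℝ) = Real.sqrt Real.pi := by
      rw [← Real.Gamma_one_half_eq, Real.Gamma_eq_integral (by norm_num : (0:ℝ) < 1/2)]
      congr 1
      ext w
      norm_num
    calc ∫ v in Ioi (0:ℝ), Real.exp (-(β * v)) * v ^ (-(1/2) : ℝ)
        = ∫ v in Ioi (0:ℝ),
            β ^ ((1:ℝ)/2) * (Real.exp (-(β * v)) * (β * v) ^ (-(1/2) : ℝ)) :=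
          (setIntegral_congr_fun measurableSet_Ioi h2).symm
      _ = β ^ ((1:ℝ)/2) * ∫ v in Ioi (0:ℝ), Real.exp (-(β * v)) * (β * v) ^ (-(1/2) : ℝ) :=
          integral_const_mul _ _
      _ = β ^ ((1:ℝ)/2) * (β⁻¹ * Real.sqrt Real.pi) := by
          rw [h3, h4, smul_eq_mul]
      _ = Real.sqrt Real.pi * (β ^ ((1:ℝ)/2) * β ^ (-1:ℝ)) := by
          rw [Real.rpow_neg_one]; ring
      _ = Real.sqrt Real.pi * β ^ (-(1:ℝ)/2) := by
          rw [← Real.rpow_add hβ]; norm_num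

lemma airy_left_refl {β : ℝ} (hβ : 0 < β) :
    IntegrableOn (fun u : ℝ => Real.exp (-(β * -u)) * (-u) ^ (-(1/2) : ℝ)) (Iic (0:ℝ)) ∧
    ∫ u in Iic (0:ℝ), Real.exp (-(β * -u)) * (-u) ^ (-(1/2) : ℝ)
      = Real.sqrt Real.pi * β ^ (-(1:ℝ)/2) := by
  obtain ⟨hint, hval⟩ := airy_gamma_int hβ
  constructor
  · have h1 := ((Measure.measurePreserving_neg (volume : Measure ℝ)).integrableOn_comp_preimage
      (Homeomorph.neg ℝ).measurableEmbedding).mpr hint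
    simp only [Function.comp_def, neg_preimage, neg_Ioi, neg_zero] at h1
    rw [integrableOn_Iic_iff_integrableOn_Iio]
    exact h1
  · have h2 := integral_comp_neg_Ioi (0:ℝ)
      (fun u : ℝ => Real.exp (-(β * -u)) * (-u) ^ (-(1/2) : ℝ))
    simp only [neg_neg, neg_zero] at h2
    rw [← h2]
    exact hval

/-- The integral `∫_ℝ e^{βu} Ai(u)² du` is finite for every `β > 0`, and there is a
constant `C > 0` such that for every `β ∈ (0, 1]`, `∫_ℝ e^{βu} Ai(u)² du ≤ C · β^{−1/2}`. -/
theorem airy_exp_square_integral_bound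
    (Ai : ℝ → ℝ)
    (hAi : ∀ x : ℝ, Tendsto (fun b : ℝ => ∫ t in (0:ℝ)..b, Real.cos (t ^ 3 / 3 + x * t))
      atTop (nhds (Real.pi * Ai x)))
    :
    (∀ β : ℝ, 0 < β → Integrable (fun u : ℝ => Real.exp (β * u) * (Ai u) ^ 2)) ∧
    ∃ C : ℝ, 0 < C ∧ ∀ β : ℝ, 0 < β → β ≤ 1 →
      (∫ u : ℝ, Real.exp (β * u) * (Ai u) ^ 2) ≤ C * β ^ (-(1:ℝ) / 2) := by
  have hmeasAi : Measurable Ai := airy_measurable Ai hAi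
  have hpi3 : (3:ℝ) < Real.pi := Real.pi_gt_three
  have hpi2 : (9:ℝ) ≤ Real.pi ^ 2 := by nlinarith
  -- pointwise bounds on Ai ^ 2
  have hsq_mid : ∀ x : ℝ, -1 ≤ x → Ai x ^ 2 ≤ 1 := by
    intro x hx
    have h1 : |Real.pi * Ai x| ≤ 3 := airy_limit_bound (hAi x) (airy_F_bound_middle hx)
    have h2 : (Real.pi * Ai x) ^ 2 ≤ 9 := by
      have hsa := sq_abs (Real.pi * Ai x)
      nlinarith [abs_nonneg (Real.pi * Ai x)]
    rw [mul_pow] at h2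
    nlinarith [sq_nonneg (Ai x)]
  have hsq_neg : ∀ x : ℝ, x ≤ -1 → Ai x ^ 2 ≤ 8 * (-x) ^ (-(1/2) : ℝ) := by
    intro x hx
    have h1 := airy_limit_bound (hAi x) (airy_F_bound_neg hx)
    have hx1 : (1:ℝ) ≤ -x := by linarith
    have hs0 : 0 < Real.sqrt (-x) := Real.sqrt_pos.mpr (by linarith)
    have hss : Real.sqrt (Real.sqrt (-x)) ^ 2 = Real.sqrt (-x) :=
      Real.sq_sqrt (Real.sqrt_nonneg _)
    have h2 : (Real.pi * Ai x) ^ 2 ≤ 64 / Real.sqrt (-x) := by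
      have h3 : |Real.pi * Ai x| ^ 2 ≤ (8 / Real.sqrt (Real.sqrt (-x))) ^ 2 := by
        apply pow_le_pow_left₀ (abs_nonneg _) h1 2
      rw [sq_abs] at h3
      rw [div_pow, hss] at h3
      norm_num at h3
      exact h3
    have h4 : Ai x ^ 2 * Real.sqrt (-x) ≤ 8 := by
      rw [mul_pow, le_div_iff₀ hs0] at h2
      nlinarith [mul_nonneg (mul_nonneg (sq_nonneg (Ai x)) hs0.le)
        (by linarith : (0:ℝ) ≤ Real.pi ^ 2 - 9)]
    have h5 : (-x) ^ (-(1/2) : ℝ) = (Real.sqrt (-x))⁻¹ := by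
      rw [Real.rpow_neg (by linarith : (0:ℝ) ≤ -x), Real.sqrt_eq_rpow]
    have h6 : Ai x ^ 2 ≤ 8 / Real.sqrt (-x) := (le_div_iff₀ hs0).mpr h4
    rw [h5, ← div_eq_mul_inv]
    exact h6
  have hsq_pos : ∀ x : ℝ, 1 ≤ x → Ai x ^ 2 ≤ Real.exp (-(4/3) * (Real.sqrt x * x)) := by
    intro x hx
    have h1 := airy_bound_pos hx (hAi x)
    have hx0 : (0:ℝ) ≤ x := by linarith
    have hs2 : Real.sqrt x ^ 2 = x := Real.sq_sqrt hx0
    have hs3 : Real.sqrt x ^ 3 = x * Real.sqrt x := by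
      rw [pow_succ, hs2]
    have h2 : (Real.pi * Ai x) ^ 2 ≤ Real.exp (-(4/3) * (Real.sqrt x * x)) * Real.pi := by
      have h3 : |Real.pi * Ai x| ^ 2
          ≤ (Real.exp (-(2/3) * Real.sqrt x ^ 3) * Real.sqrt Real.pi) ^ 2 :=
        pow_le_pow_left₀ (abs_nonneg _) h1 2
      rw [sq_abs] at h3
      refine h3.trans (le_of_eq ?_)
      have hee : Real.exp (-(2/3) * Real.sqrt x ^ 3) * Real.exp (-(2/3) * Real.sqrt x ^ 3)
          = Real.exp (-(4/3) * (Real.sqrt x * x)) := by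
        rw [← Real.exp_add]
        congr 1
        rw [hs3]; ring
      calc (Real.exp (-(2/3) * Real.sqrt x ^ 3) * Real.sqrt Real.pi) ^ 2
          = (Real.exp (-(2/3) * Real.sqrt x ^ 3) * Real.exp (-(2/3) * Real.sqrt x ^ 3))
            * Real.sqrt Real.pi ^ 2 := by ring
        _ = Real.exp (-(4/3) * (Real.sqrt x * x)) * Real.pi := by
            rw [hee, Real.sq_sqrt Real.pi_pos.le]
    rw [mul_pow] at h2
    nlinarith [sq_nonneg (Ai x), Real.pi_pos,
      mul_nonneg (mul_nonneg Real.pi_pos.le (by linarith : (0:ℝ) ≤ Real.pi - 1))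
        (sq_nonneg (Ai x))]
  -- measurability of the integrand
  have hfm : ∀ β : ℝ, Measurable fun u : ℝ => Real.exp (β * u) * Ai u ^ 2 :=
    fun β => (Real.measurable_exp.comp (measurable_id.const_mul β)).mul
      (hmeasAi.pow measurable_const)
  have hfnn : ∀ β : ℝ, ∀ u : ℝ, 0 ≤ Real.exp (β * u) * Ai u ^ 2 := by
    intro β u; positivity
  -- the three pieces, for every β > 0
  have hleftInt : ∀ β : ℝ, 0 < β →
      IntegrableOn (fun u : ℝ => Real.exp (β * u) * Ai u ^ 2) (Iic (-1:ℝ)) := by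
    intro β hβ
    obtain ⟨hGint, -⟩ := airy_left_refl hβ
    have hGint' : IntegrableOn
        (fun u : ℝ => Real.exp (-(β * -u)) * (-u) ^ (-(1/2) : ℝ)) (Iic (-1:ℝ)) :=
      hGint.mono_set (Iic_subset_Iic.mpr (by norm_num))
    apply Integrable.mono' (hGint'.const_mul 8) ((hfm β).aestronglyMeasurable.restrict)
    filter_upwards [ae_restrict_mem measurableSet_Iic] with u hu
    have hu1 : u ≤ -1 := hu
    rw [Real.norm_eq_abs, abs_of_nonneg (hfnn β u)]
    calc Real.exp (β * u) * Ai u ^ 2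
        ≤ Real.exp (β * u) * (8 * (-u) ^ (-(1/2) : ℝ)) := by
          apply mul_le_mul_of_nonneg_left (hsq_neg u hu1) (Real.exp_pos _).le
      _ = 8 * (Real.exp (-(β * -u)) * (-u) ^ (-(1/2) : ℝ)) := by
          rw [show -(β * -u) = β * u by ring]; ring
  have hmidInt : ∀ β : ℝ, 0 < β →
      IntegrableOn (fun u : ℝ => Real.exp (β * u) * Ai u ^ 2) (Ioc (-1:ℝ) 1) := by
    intro β hβ
    apply Integrable.mono' (g := fun _ => Real.exp (β * 1))
      ((integrableOn_const_iff).mpr (Or.inr measure_Ioc_lt_top))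
      ((hfm β).aestronglyMeasurable.restrict)
    filter_upwards [ae_restrict_mem measurableSet_Ioc] with u hu
    rw [Real.norm_eq_abs, abs_of_nonneg (hfnn β u)]
    calc Real.exp (β * u) * Ai u ^ 2 ≤ Real.exp (β * u) * 1 := by
          apply mul_le_mul_of_nonneg_left (hsq_mid u hu.1.le) (Real.exp_pos _).le
      _ ≤ Real.exp (β * 1) := by
          rw [mul_one]
          apply Real.exp_le_exp.mpr
          exact mul_le_mul_of_nonneg_left hu.2 hβ.le
  have hrightIntAux : ∀ β : ℝ, 0 < β → ∀ u : ℝ, 1 ≤ u →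
      Real.exp (β * u) * Ai u ^ 2 ≤ Real.exp (β * u - 4/3 * (Real.sqrt u * u)) := by
    intro β hβ u hu
    calc Real.exp (β * u) * Ai u ^ 2
        ≤ Real.exp (β * u) * Real.exp (-(4/3) * (Real.sqrt u * u)) := by
          apply mul_le_mul_of_nonneg_left (hsq_pos u hu) (Real.exp_pos _).le
      _ = Real.exp (β * u - 4/3 * (Real.sqrt u * u)) := by
          rw [← Real.exp_add]; congr 1; ring
  have hrightInt : ∀ β : ℝ, 0 < β →
      IntegrableOn (fun u : ℝ => Real.exp (β * u) * Ai u ^ 2) (Ioi (1:ℝ)) := by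
    intro β hβ
    set M : ℝ := max 1 ((3 * (β + 1) / 4) ^ 2) with hMdef
    have hM1 : (1:ℝ) ≤ M := le_max_left _ _
    rw [← Ioc_union_Ioi_eq_Ioi hM1, integrableOn_union]
    constructor
    · apply Integrable.mono' (g := fun _ => Real.exp (β * M))
        ((integrableOn_const_iff).mpr (Or.inr measure_Ioc_lt_top))
        ((hfm β).aestronglyMeasurable.restrict)
      filter_upwards [ae_restrict_mem measurableSet_Ioc] with u hu
      rw [Real.norm_eq_abs, abs_of_nonneg (hfnn β u)]
      calc Real.exp (β * u) * Ai u ^ 2 ≤ Real.exp (β * u) * 1 := by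
            apply mul_le_mul_of_nonneg_left (hsq_mid u (by linarith [hu.1])) (Real.exp_pos _).le
        _ ≤ Real.exp (β * M) := by
            rw [mul_one]
            exact Real.exp_le_exp.mpr (mul_le_mul_of_nonneg_left hu.2 hβ.le)
    · have hexpInt : IntegrableOn (fun u : ℝ => Real.exp (-u)) (Ioi M) := by
        have h := exp_neg_integrableOn_Ioi M (by norm_num : (0:ℝ) < 1)
        simpa using h
      apply Integrable.mono' hexpInt ((hfm β).aestronglyMeasurable.restrict)
      filter_upwards [ae_restrict_mem measurableSet_Ioi] with u hu
      have huM : M < u := hu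
      have hu1 : (1:ℝ) ≤ u := by linarith
      rw [Real.norm_eq_abs, abs_of_nonneg (hfnn β u)]
      refine (hrightIntAux β hβ u hu1).trans ?_
      apply Real.exp_le_exp.mpr
      have hsu : 3 * (β + 1) / 4 ≤ Real.sqrt u := by
        have h1 : Real.sqrt ((3 * (β + 1) / 4) ^ 2) ≤ Real.sqrt u :=
          Real.sqrt_le_sqrt (le_of_lt (lt_of_le_of_lt (le_max_right _ _) huM))
        rwa [Real.sqrt_sq (by positivity : (0:ℝ) ≤ 3 * (β + 1) / 4)] at h1
      have hu0 : (0:ℝ) < u := by linarith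
      nlinarith [mul_le_mul_of_nonneg_right hsu hu0.le]
  -- integrability
  have hIic1 : ∀ β : ℝ, 0 < β →
      IntegrableOn (fun u : ℝ => Real.exp (β * u) * Ai u ^ 2) (Iic (1:ℝ)) := by
    intro β hβ
    rw [← Iic_union_Ioc_eq_Iic (by norm_num : (-1:ℝ) ≤ 1), integrableOn_union]
    exact ⟨hleftInt β hβ, hmidInt β hβ⟩
  have hIntAll : ∀ β : ℝ, 0 < β →
      Integrable (fun u : ℝ => Real.exp (β * u) * Ai u ^ 2) := by
    intro β hβ
    rw [← integrableOn_univ, ← Iic_union_Ioi (a := (1:ℝ)), integrableOn_union]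
    exact ⟨hIic1 β hβ, hrightInt β hβ⟩
  refine ⟨hIntAll, 8 * Real.sqrt Real.pi + 2 * Real.exp 1 + 3, by positivity, ?_⟩
  intro β hβ hβ1
  have hβp : (1:ℝ) ≤ β ^ (-(1:ℝ)/2) := by
    apply Real.one_le_rpow_of_pos_of_le_one_of_nonpos hβ hβ1
    norm_num
  have hsplit : (∫ u : ℝ, Real.exp (β * u) * Ai u ^ 2)
      = (∫ u in Iic (-1:ℝ), Real.exp (β * u) * Ai u ^ 2)
        + (∫ u in Ioc (-1:ℝ) 1, Real.exp (β * u) * Ai u ^ 2)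
        + ∫ u in Ioi (1:ℝ), Real.exp (β * u) * Ai u ^ 2 := by
    rw [← intervalIntegral.integral_Iic_add_Ioi (hIic1 β hβ) (hrightInt β hβ)]
    congr 1
    rw [← Iic_union_Ioc_eq_Iic (by norm_num : (-1:ℝ) ≤ 1)]
    rw [setIntegral_union (Iic_disjoint_Ioc le_rfl) measurableSet_Ioc
      (hleftInt β hβ) (hmidInt β hβ)]
  obtain ⟨hGint, hGval⟩ := airy_left_refl hβ
  have hleftBound : (∫ u in Iic (-1:ℝ), Real.exp (β * u) * Ai u ^ 2)
      ≤ 8 * Real.sqrt Real.pi * β ^ (-(1:ℝ)/2) := by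
    have hGint' : IntegrableOn
        (fun u : ℝ => Real.exp (-(β * -u)) * (-u) ^ (-(1/2) : ℝ)) (Iic (-1:ℝ)) :=
      hGint.mono_set (Iic_subset_Iic.mpr (by norm_num))
    calc (∫ u in Iic (-1:ℝ), Real.exp (β * u) * Ai u ^ 2)
        ≤ ∫ u in Iic (-1:ℝ), 8 * (Real.exp (-(β * -u)) * (-u) ^ (-(1/2) : ℝ)) := by
          apply setIntegral_mono_on (hleftInt β hβ) (hGint'.const_mul 8) measurableSet_Iic
          intro u hu
          calc Real.exp (β * u) * Ai u ^ 2
              ≤ Real.exp (β * u) * (8 * (-u) ^ (-(1/2) : ℝ)) := by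
                apply mul_le_mul_of_nonneg_left (hsq_neg u hu) (Real.exp_pos _).le
            _ = 8 * (Real.exp (-(β * -u)) * (-u) ^ (-(1/2) : ℝ)) := by
                rw [show -(β * -u) = β * u by ring]; ring
      _ ≤ ∫ u in Iic (0:ℝ), 8 * (Real.exp (-(β * -u)) * (-u) ^ (-(1/2) : ℝ)) := by
          apply setIntegral_mono_set (hGint.const_mul 8)
          · filter_upwards [ae_restrict_mem measurableSet_Iic] with u hu
            have hu0 : u ≤ 0 := hu
            have hrp : (0:ℝ) ≤ (-u) ^ (-(1/2) : ℝ) :=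
              Real.rpow_nonneg (by linarith) _
            positivity
          · exact HasSubset.Subset.eventuallyLE (Iic_subset_Iic.mpr (by norm_num))
      _ = 8 * ∫ u in Iic (0:ℝ), Real.exp (-(β * -u)) * (-u) ^ (-(1/2) : ℝ) :=
          integral_const_mul _ _
      _ = 8 * (Real.sqrt Real.pi * β ^ (-(1:ℝ)/2)) := by rw [hGval]
      _ = 8 * Real.sqrt Real.pi * β ^ (-(1:ℝ)/2) := by ring
  have hmidBound : (∫ u in Ioc (-1:ℝ) 1, Real.exp (β * u) * Ai u ^ 2)
      ≤ 2 * Real.exp 1 := by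
    calc (∫ u in Ioc (-1:ℝ) 1, Real.exp (β * u) * Ai u ^ 2)
        ≤ ∫ _u in Ioc (-1:ℝ) 1, Real.exp 1 := by
          apply setIntegral_mono_on (hmidInt β hβ)
            ((integrableOn_const_iff).mpr (Or.inr measure_Ioc_lt_top)) measurableSet_Ioc
          intro u hu
          calc Real.exp (β * u) * Ai u ^ 2 ≤ Real.exp (β * u) * 1 := by
                apply mul_le_mul_of_nonneg_left (hsq_mid u hu.1.le) (Real.exp_pos _).le
            _ ≤ Real.exp 1 := by
                rw [mul_one]
                apply Real.exp_le_exp.mpr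
                nlinarith [hu.2, hβ.le]
      _ = 2 * Real.exp 1 := by
          rw [setIntegral_const, Real.volume_real_Ioc_of_le (by norm_num), smul_eq_mul]
          rw [show (1:ℝ) - (-1) = 2 by norm_num]
  have hrightBound : (∫ u in Ioi (1:ℝ), Real.exp (β * u) * Ai u ^ 2) ≤ 3 := by
    have hexpInt3 : IntegrableOn (fun u : ℝ => Real.exp (-((3:ℝ)⁻¹ * u))) (Ioi (1:ℝ)) := by
      have h := exp_neg_integrableOn_Ioi 1 (by norm_num : (0:ℝ) < 3⁻¹)
      simpa [neg_mul] using h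
    calc (∫ u in Ioi (1:ℝ), Real.exp (β * u) * Ai u ^ 2)
        ≤ ∫ u in Ioi (1:ℝ), Real.exp (-((3:ℝ)⁻¹ * u)) := by
          apply setIntegral_mono_on (hrightInt β hβ) hexpInt3 measurableSet_Ioi
          intro u hu
          have hu1 : (1:ℝ) ≤ u := le_of_lt hu
          refine (hrightIntAux β hβ u hu1).trans ?_
          apply Real.exp_le_exp.mpr
          have hsu : (1:ℝ) ≤ Real.sqrt u := Real.one_le_sqrt.mpr hu1
          nlinarith [mul_le_mul_of_nonneg_right hsu (by linarith : (0:ℝ) ≤ u),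
            mul_le_mul_of_nonneg_right hβ1 (by linarith : (0:ℝ) ≤ u)]
      _ = (3:ℝ) * ∫ w in Ioi ((3:ℝ)⁻¹ * 1), Real.exp (-w) := by
          have h := integral_comp_mul_left_Ioi (fun w : ℝ => Real.exp (-w)) 1
            (by norm_num : (0:ℝ) < 3⁻¹)
          rw [h, smul_eq_mul]
          norm_num
      _ ≤ 3 := by
          rw [integral_exp_neg_Ioi]
          nlinarith [Real.exp_le_one_iff.mpr (by norm_num : -((3:ℝ)⁻¹ * 1) ≤ 0)]
  rw [hsplit]
  have hC : 8 * Real.sqrt Real.pi * β ^ (-(1:ℝ)/2) + 2 * Real.exp 1 + 3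
      ≤ (8 * Real.sqrt Real.pi + 2 * Real.exp 1 + 3) * β ^ (-(1:ℝ)/2) := by
    nlinarith [Real.exp_pos 1, Real.sqrt_nonneg Real.pi, hβp]
  linarith [hleftBound, hmidBound, hrightBound]
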